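/- Automorphisms of the complement of the diagonal (Remark 3.5): Let α ∈ ℂ with α ≠ 0 and let g : ℂ → ℂ be an entire function. Define Φ(z,w) = (α·z + g(1/(z − w)), α·w + g(1/(z − w))) for z ≠ w. Then Φ maps the open set V = {(z,w) ∈ ℂ × ℂ : z ≠ w} bijectively onto itself, Φ is holomorphic on V, and its inverse is the map (z',w') ↦ ((z' − g(α/(z' − w')))/α, (w' − g(α/(z' − w')))/α), which is also holomorphic on V. -/

import Mathlib

/-- Remark 3.5: for `α ≠ 0` and entire `g`, the map
`Φ(z,w) = (αz + g(1/(z-w)), αw + g(1/(z-w)))` is a holomorphic bijection of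
`V = {(z,w) : z ≠ w}` onto itself, with holomorphic inverse
`(z',w') ↦ ((z' - g(α/(z'-w')))/α, (w' - g(α/(z'-w')))/α)`. -/
theorem phi_automorphism_of_offDiagonal
    (α : ℂ) (hα : α ≠ 0) (g : ℂ → ℂ) (hg : Differentiable ℂ g) :
    Set.BijOn
      (fun p : ℂ × ℂ =>
        (α * p.1 + g (1 / (p.1 - p.2)), α * p.2 + g (1 / (p.1 - p.2))))
      {p : ℂ × ℂ | p.1 ≠ p.2} {p : ℂ × ℂ | p.1 ≠ p.2} ∧
    DifferentiableOn ℂ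
      (fun p : ℂ × ℂ =>
        (α * p.1 + g (1 / (p.1 - p.2)), α * p.2 + g (1 / (p.1 - p.2))))
      {p : ℂ × ℂ | p.1 ≠ p.2} ∧
    (∀ p ∈ {p : ℂ × ℂ | p.1 ≠ p.2},
      (fun q : ℂ × ℂ =>
        ((q.1 - g (α / (q.1 - q.2))) / α, (q.2 - g (α / (q.1 - q.2))) / α))
        ((fun p : ℂ × ℂ =>
          (α * p.1 + g (1 / (p.1 - p.2)), α * p.2 + g (1 / (p.1 - p.2)))) p) = p) ∧
    (∀ q ∈ {p : ℂ × ℂ | p.1 ≠ p.2},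
      (fun p : ℂ × ℂ =>
        (α * p.1 + g (1 / (p.1 - p.2)), α * p.2 + g (1 / (p.1 - p.2))))
        ((fun q : ℂ × ℂ =>
          ((q.1 - g (α / (q.1 - q.2))) / α, (q.2 - g (α / (q.1 - q.2))) / α)) q) = q) ∧
    DifferentiableOn ℂ
      (fun q : ℂ × ℂ =>
        ((q.1 - g (α / (q.1 - q.2))) / α, (q.2 - g (α / (q.1 - q.2))) / α))
      {p : ℂ × ℂ | p.1 ≠ p.2} := by
  set V : Set (ℂ × ℂ) := {p : ℂ × ℂ | p.1 ≠ p.2} with hV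
  set Φ : ℂ × ℂ → ℂ × ℂ := fun p =>
    (α * p.1 + g (1 / (p.1 - p.2)), α * p.2 + g (1 / (p.1 - p.2))) with hΦ
  set Ψ : ℂ × ℂ → ℂ × ℂ := fun q =>
    ((q.1 - g (α / (q.1 - q.2))) / α, (q.2 - g (α / (q.1 - q.2))) / α) with hΨ
  have hmapΦ : Set.MapsTo Φ V V := by
    intro p hp
    have hsub : p.1 - p.2 ≠ 0 := sub_ne_zero.mpr hp
    simp only [hΦ, hV, Set.mem_setOf_eq]
    intro h
    have : α * p.1 = α * p.2 := by linear_combination h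
    exact hp (mul_left_cancel₀ hα this)
  have hmapΨ : Set.MapsTo Ψ V V := by
    intro q hq
    have hsub : q.1 - q.2 ≠ 0 := sub_ne_zero.mpr hq
    simp only [hΨ, hV, Set.mem_setOf_eq]
    intro h
    field_simp at h
    exact hq (sub_left_inj.mp h)
  have hleft : ∀ p ∈ V, Ψ (Φ p) = p := by
    intro p hp
    have hsub : p.1 - p.2 ≠ 0 := sub_ne_zero.mpr hp
    have key : α * p.1 + g (1 / (p.1 - p.2)) - (α * p.2 + g (1 / (p.1 - p.2)))
        = α * (p.1 - p.2) := by ring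
    simp only [hΨ, hΦ, key]
    have : α / (α * (p.1 - p.2)) = 1 / (p.1 - p.2) := by
      field_simp
    rw [this]
    have h1 : (α * p.1 + g (1 / (p.1 - p.2)) - g (1 / (p.1 - p.2))) / α = p.1 := by
      field_simp
      ring
    have h2 : (α * p.2 + g (1 / (p.1 - p.2)) - g (1 / (p.1 - p.2))) / α = p.2 := by
      field_simp
      ring
    rw [h1, h2]
  have hright : ∀ q ∈ V, Φ (Ψ q) = q := by
    intro q hq
    have hsub : q.1 - q.2 ≠ 0 := sub_ne_zero.mpr hq
    have key : (q.1 - g (α / (q.1 - q.2))) / α - (q.2 - g (α / (q.1 - q.2))) / α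
        = (q.1 - q.2) / α := by ring
    simp only [hΦ, hΨ, key]
    have : 1 / ((q.1 - q.2) / α) = α / (q.1 - q.2) := one_div_div _ _
    rw [this]
    have h1 : α * ((q.1 - g (α / (q.1 - q.2))) / α) + g (α / (q.1 - q.2)) = q.1 := by
      field_simp
      ring
    have h2 : α * ((q.2 - g (α / (q.1 - q.2))) / α) + g (α / (q.1 - q.2)) = q.2 := by
      field_simp
      ring
    rw [h1, h2]
  have hdiffΦ : DifferentiableOn ℂ Φ V := by
    have hinv : DifferentiableOn ℂ (fun p : ℂ × ℂ => (p.1 - p.2)⁻¹) V :=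
      ((differentiable_fst.sub differentiable_snd).differentiableOn).inv
        (fun p hp => sub_ne_zero.mpr hp)
    have hd : DifferentiableOn ℂ (fun p : ℂ × ℂ => g (1 / (p.1 - p.2))) V := by
      simp only [one_div]
      exact hg.comp_differentiableOn hinv
    exact DifferentiableOn.prodMk
      (((differentiable_const α).mul differentiable_fst).differentiableOn.add hd)
      (((differentiable_const α).mul differentiable_snd).differentiableOn.add hd)
  have hdiffΨ : DifferentiableOn ℂ Ψ V := by
    have hinv : DifferentiableOn ℂ (fun p : ℂ × ℂ => (p.1 - p.2)⁻¹) V :=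
      ((differentiable_fst.sub differentiable_snd).differentiableOn).inv
        (fun p hp => sub_ne_zero.mpr hp)
    have hd : DifferentiableOn ℂ (fun q : ℂ × ℂ => g (α / (q.1 - q.2))) V := by
      simp only [div_eq_mul_inv]
      exact hg.comp_differentiableOn ((differentiableOn_const α).mul hinv)
    have h1 : DifferentiableOn ℂ (fun q : ℂ × ℂ => (q.1 - g (α / (q.1 - q.2))) / α) V :=
      by
        simp only [div_eq_mul_inv]
        exact (differentiable_fst.differentiableOn.sub hd).mul_const _
    have h2 : DifferentiableOn ℂ (fun q : ℂ × ℂ => (q.2 - g (α / (q.1 - q.2))) / α) V :=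
      by
        simp only [div_eq_mul_inv]
        exact (differentiable_snd.differentiableOn.sub hd).mul_const _
    exact h1.prodMk h2
  refine ⟨⟨hmapΦ, ?_, ?_⟩, hdiffΦ, hleft, hright, hdiffΨ⟩
  · intro p hp p' hp' h
    have := hleft p hp
    rw [h, hleft p' hp'] at this
    exact this.symm
  · intro q hq
    exact ⟨Ψ q, hmapΨ hq, hright q hq⟩
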